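/- Let p > 2, q = p/(p−1) < 2, and let X be uniform on B_p^n, n ≥ 2. Set θ = e_1 and η = (e_1+e_2)/√2. Then |⟨θ,x⟩| ≤ 1 for all x ∈ B_p^n while sup_{x ∈ B_p^n} |⟨η,x⟩| = 2^{1/q − 1/2} > 1; consequently ℙ(⟨η,X⟩² > 1) > 0 and E(⟨η,X⟩² − 1)₊ > 0 = E(⟨θ,X⟩² − 1)₊, so the convex order ⟨η,X⟩² ≼_cx ⟨θ,X⟩² fails even though (θ_1²,...,θ_n²) majorizes (η_1²,...,η_n²). -/

import Mathlib

open MeasureTheory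

lemma two_term_holder (a b p : ℝ) (ha : 0 ≤ a) (hb : 0 ≤ b) (hp : 1 ≤ p)
    (hab : a ^ p + b ^ p ≤ 1) : a + b ≤ 2 ^ (1 - 1/p) := by
  have hp0 : 0 < p := lt_of_lt_of_le one_pos hp
  have h1 : (a + b) ^ p ≤ 2 ^ (p - 1) * (a ^ p + b ^ p) := by
    have := NNReal.rpow_add_le_mul_rpow_add_rpow (a.toNNReal) (b.toNNReal) hp
    have h2 := (NNReal.coe_le_coe).2 this
    push_cast at h2
    rw [Real.coe_toNNReal a ha, Real.coe_toNNReal b hb] at h2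
    convert h2 using 2
  have h3 : (a + b) ^ p ≤ 2 ^ (p - 1) := by
    calc (a+b)^p ≤ 2 ^ (p-1) * (a^p+b^p) := h1
    _ ≤ 2 ^ (p-1) * 1 := mul_le_mul_of_nonneg_left hab (Real.rpow_nonneg (by norm_num) _)
    _ = 2 ^ (p-1) := mul_one _
  have h4 : ((a+b)^p) ^ (1/p) ≤ (2 ^ (p-1) : ℝ) ^ (1/p) :=
    Real.rpow_le_rpow (Real.rpow_nonneg (by positivity) _) h3 (by positivity)
  rw [← Real.rpow_mul (by positivity), ← Real.rpow_mul (by norm_num),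
    mul_one_div, div_self hp0.ne', Real.rpow_one] at h4
  rwa [show (p-1)*(1/p) = 1 - 1/p by field_simp] at h4

set_option maxHeartbeats 2000000 in
theorem stmt_19 (n : ℕ) (hn : 2 ≤ n) (p : ℝ) (hp : 2 < p)
    (q : ℝ) (hq : q = p / (p - 1))
    (B : Set (Fin n → ℝ)) (hB : B = {x : Fin n → ℝ | ∑ i, |x i| ^ p ≤ 1})
    (μ : Measure (Fin n → ℝ)) (hμ : μ = (volume B)⁻¹ • volume.restrict B) :
    (∀ x ∈ B, |x ⟨0, by omega⟩| ≤ 1) ∧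
    IsGreatest ((fun x => |(x ⟨0, by omega⟩ + x ⟨1, by omega⟩) / Real.sqrt 2|) '' B)
      ((2 : ℝ) ^ (1 / q - 1 / 2)) ∧
    1 < (2 : ℝ) ^ (1 / q - 1 / 2) ∧
    0 < μ {x : Fin n → ℝ | 1 < ((x ⟨0, by omega⟩ + x ⟨1, by omega⟩) / Real.sqrt 2) ^ 2} ∧
    0 < ∫ x, max (((x ⟨0, by omega⟩ + x ⟨1, by omega⟩) / Real.sqrt 2) ^ 2 - 1) 0 ∂μ ∧
    (∫ x, max ((x ⟨0, by omega⟩) ^ 2 - 1) 0 ∂μ) = 0 ∧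
    ¬ (∀ Φ : ℝ → ℝ, ConvexOn ℝ Set.univ Φ →
        Integrable (fun x => Φ (((x ⟨0, by omega⟩ + x ⟨1, by omega⟩) / Real.sqrt 2) ^ 2)) μ →
        Integrable (fun x => Φ ((x ⟨0, by omega⟩) ^ 2)) μ →
        ∫ x, Φ (((x ⟨0, by omega⟩ + x ⟨1, by omega⟩) / Real.sqrt 2) ^ 2) ∂μ
          ≤ ∫ x, Φ ((x ⟨0, by omega⟩) ^ 2) ∂μ) := by
  have hp0 : (0:ℝ) < p := by linarith
  have hq1p : 1/q = 1 - 1/p := by rw [hq]; field_simp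
  have he : 1/q - 1/2 = 1/2 - 1/p := by rw [hq1p]; ring
  have hhalf : 1/p < 1/2 := by
    rw [div_lt_div_iff₀ hp0 two_pos]; linarith
  set i0 : Fin n := ⟨0, by omega⟩ with hi0
  set i1 : Fin n := ⟨1, by omega⟩ with hi1
  have hne : i0 ≠ i1 := by simp [hi0, hi1, Fin.ext_iff]
  have hsqrt2 : Real.sqrt 2 = 2 ^ ((1:ℝ)/2) := Real.sqrt_eq_rpow 2
  have hsqrt2pos : (0:ℝ) < Real.sqrt 2 := Real.sqrt_pos.2 (by norm_num)
  -- coordinate bound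
  have hcoord : ∀ x ∈ B, ∀ i, |x i| ≤ 1 := by
    intro x hx i
    rw [hB] at hx
    have hterm : |x i| ^ p ≤ 1 := by
      refine le_trans ?_ hx
      exact Finset.single_le_sum (f := fun j => |x j| ^ p)
        (fun j _ => Real.rpow_nonneg (abs_nonneg _) _) (Finset.mem_univ i)
    by_contra h
    push_neg at h
    have := (Real.one_lt_rpow_iff_of_pos (lt_trans one_pos h) (y := p)).2
      (Or.inl ⟨h, by linarith⟩)
    linarith
  -- upper bound
  have hub : ∀ x ∈ B, |(x i0 + x i1) / Real.sqrt 2| ≤ (2:ℝ) ^ (1/q - 1/2) := by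
    intro x hx
    rw [hB] at hx
    have hpair := Finset.sum_pair (f := fun j => |x j| ^ p) hne
    have hsum2 : |x i0| ^ p + |x i1| ^ p ≤ 1 := by
      rw [← hpair]
      refine le_trans (Finset.sum_le_sum_of_subset_of_nonneg (Finset.subset_univ _)
        (fun j _ _ => Real.rpow_nonneg (abs_nonneg _) _)) hx
    have h1 : |x i0| + |x i1| ≤ 2 ^ (1 - 1/p) :=
      two_term_holder _ _ p (abs_nonneg _) (abs_nonneg _) (by linarith) hsum2
    have h2 : |x i0 + x i1| ≤ 2 ^ (1 - 1/p) := le_trans (abs_add_le _ _) h1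
    rw [abs_div, abs_of_pos hsqrt2pos, div_le_iff₀ hsqrt2pos, hsqrt2,
      ← Real.rpow_add (by norm_num), he]
    convert h2 using 2
    · rfl
    ring
  -- witness
  have hwit : ∃ z ∈ B, |(z i0 + z i1) / Real.sqrt 2| = (2:ℝ) ^ (1/q - 1/2) := by
    set c : ℝ := (2:ℝ) ^ (-(1/p)) with hc
    have hcpos : 0 < c := Real.rpow_pos_of_pos two_pos _
    refine ⟨fun i => if i.val < 2 then c else 0, ?_, ?_⟩
    · rw [hB]
      simp only [Set.mem_setOf_eq]
      have hzero : ∀ i ∈ Finset.univ, i ∉ ({i0, i1} : Finset (Fin n)) →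
          |if (i : Fin n).val < 2 then c else 0| ^ p = 0 := by
        intro i _ hi
        have : ¬ i.val < 2 := by
          intro h
          apply hi
          simp only [Finset.mem_insert, Finset.mem_singleton, hi0, hi1, Fin.ext_iff]
          omega
        simp [this, Real.zero_rpow hp0.ne']
      rw [← Finset.sum_subset (Finset.subset_univ ({i0, i1} : Finset (Fin n))) hzero,
        Finset.sum_pair hne]
      have : |c| ^ p = 1/2 := by
        rw [abs_of_pos hcpos, hc, ← Real.rpow_mul (by norm_num),
          show -(1/p) * p = -1 by field_simp, Real.rpow_neg_one]
        norm_num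
      simp only [hi0, hi1]
      norm_num [this]
    · simp only [hi0, hi1]
      norm_num
      rw [abs_of_pos (by positivity)]
      rw [show c + c = 2 * c by ring, hsqrt2, hc]
      rw [show (2:ℝ) * 2 ^ (-(1/p)) = 2 ^ (1 - 1/p) by
        rw [Real.rpow_sub two_pos, Real.rpow_one]; rw [Real.rpow_neg (by norm_num)]; ring]
      rw [← Real.rpow_sub two_pos]
      congr 1
      have hq' : q⁻¹ = 1/q := (one_div q).symm
      linarith
  -- part 3
  have hgt1 : 1 < (2:ℝ) ^ (1/q - 1/2) := by
    rw [he]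
    exact Real.one_lt_rpow_iff_of_pos two_pos |>.2 (Or.inl ⟨one_lt_two, by linarith⟩)
  -- sup value ≤ 2
  have hM2 : (2:ℝ) ^ (1/q - 1/2) ≤ 2 := by
    calc (2:ℝ) ^ (1/q - 1/2) ≤ 2 ^ (1:ℝ) :=
          Real.rpow_le_rpow_of_exponent_le one_le_two (by rw [he]; have h' : (0:ℝ) < 1/p := one_div_pos.2 hp0; linarith)
      _ = 2 := Real.rpow_one 2
  -- measure-theoretic setup
  have hFcont : Continuous (fun x : Fin n → ℝ => ∑ i, |x i| ^ p) := by
    refine continuous_finset_sum _ fun i _ => ?_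
    exact ((continuous_abs.comp (continuous_apply i)).rpow_const fun x => Or.inr hp0.le)
  have hBclosed : IsClosed B := by
    rw [hB]; exact isClosed_le hFcont continuous_const
  have hBmeas : MeasurableSet B := hBclosed.measurableSet
  have hBsub : B ⊆ Set.pi Set.univ fun _ : Fin n => Set.Icc (-1:ℝ) 1 := by
    intro x hx i _
    have := hcoord x hx i
    exact ⟨by cases abs_le.1 this; linarith, (abs_le.1 this).2⟩
  have hBcompact : IsCompact B :=
    (isCompact_univ_pi fun _ => isCompact_Icc).of_isClosed_subset hBclosed hBsub
  have hvol_top : volume B < ⊤ := hBcompact.measure_lt_top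
  have hvol_pos : 0 < volume B := by
    have hopen : IsOpen {x : Fin n → ℝ | ∑ i, |x i| ^ p < 1} := isOpen_lt hFcont continuous_const
    have hsub : {x : Fin n → ℝ | ∑ i, |x i| ^ p < 1} ⊆ B := by
      intro x hx
      rw [hB]
      exact le_of_lt (Set.mem_setOf_eq ▸ hx)
    have hne0 : (0 : Fin n → ℝ) ∈ {x : Fin n → ℝ | ∑ i, |x i| ^ p < 1} := by
      simp [Real.zero_rpow hp0.ne']
    calc (0:ENNReal) < volume {x : Fin n → ℝ | ∑ i, |x i| ^ p < 1} :=
        hopen.measure_pos volume ⟨0, hne0⟩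
      _ ≤ volume B := measure_mono hsub
  haveI : IsProbabilityMeasure μ := by
    constructor
    rw [hμ, Measure.smul_apply, Measure.restrict_apply MeasurableSet.univ, Set.univ_inter,
      smul_eq_mul]
    exact ENNReal.inv_mul_cancel hvol_pos.ne' hvol_top.ne
  -- the "bad" set
  set g : (Fin n → ℝ) → ℝ := fun x => (x i0 + x i1) / Real.sqrt 2 with hg
  have hgcont : Continuous g :=
    ((continuous_apply i0).add (continuous_apply i1)).div_const _
  set S : Set (Fin n → ℝ) := {x | 1 < g x ^ 2} with hS
  have hSopen : IsOpen S := isOpen_lt continuous_const (hgcont.pow 2)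
  have hSmeas : MeasurableSet S := hSopen.measurableSet
  -- positivity of volume (S ∩ B)
  have hSB_pos : 0 < volume (S ∩ B) := by
    set c : ℝ := ((2:ℝ) ^ (-(1/2 : ℝ)) + (2:ℝ) ^ (-(1/p))) / 2 with hc
    have hlt : (2:ℝ) ^ (-(1/2:ℝ)) < (2:ℝ) ^ (-(1/p)) :=
      Real.rpow_lt_rpow_of_exponent_lt one_lt_two (by linarith)
    have hc1 : (2:ℝ) ^ (-(1/2:ℝ)) < c := by rw [hc]; linarith
    have hc2 : c < (2:ℝ) ^ (-(1/p)) := by rw [hc]; linarith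
    have hcpos : 0 < c := lt_trans (Real.rpow_pos_of_pos two_pos _) hc1
    set w : Fin n → ℝ := fun i => if i.val < 2 then c else 0 with hw
    set V : Set (Fin n → ℝ) :=
      {x | ∑ i, |x i| ^ p < 1} ∩ {x | Real.sqrt 2 < x i0 + x i1} with hV
    have hVopen : IsOpen V :=
      (isOpen_lt hFcont continuous_const).inter
        (isOpen_lt continuous_const ((continuous_apply i0).add (continuous_apply i1)))
    have hwV : w ∈ V := by
      constructor
      · show ∑ i, |w i| ^ p < 1
        have hzero : ∀ i ∈ Finset.univ, i ∉ ({i0, i1} : Finset (Fin n)) → |w i| ^ p = 0 := by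
          intro i _ hi
          have : ¬ i.val < 2 := by
            intro h
            apply hi
            simp only [Finset.mem_insert, Finset.mem_singleton, hi0, hi1, Fin.ext_iff]
            omega
          simp [hw, this, show ¬ (i:ℕ) ≤ 1 by omega, Real.zero_rpow hp0.ne']
        rw [← Finset.sum_subset (Finset.subset_univ ({i0, i1} : Finset (Fin n))) hzero,
          Finset.sum_pair hne]
        have hwi0 : w i0 = c := by simp [hw, hi0]
        have hwi1 : w i1 = c := by simp [hw, hi1]
        rw [hwi0, hwi1, abs_of_pos hcpos]
        have : c ^ p < ((2:ℝ) ^ (-(1/p))) ^ p := Real.rpow_lt_rpow hcpos.le hc2 hp0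
        have h12 : ((2:ℝ) ^ (-(1/p))) ^ p = 1/2 := by
          rw [← Real.rpow_mul (by norm_num), show -(1/p) * p = -1 by field_simp,
            Real.rpow_neg_one]
          norm_num
        rw [h12] at this
        linarith
      · show Real.sqrt 2 < w i0 + w i1
        have hwi0 : w i0 = c := by simp [hw, hi0]
        have hwi1 : w i1 = c := by simp [hw, hi1]
        rw [hwi0, hwi1, hsqrt2]
        have : (2:ℝ) ^ ((1:ℝ)/2) = 2 * (2:ℝ) ^ (-(1/2:ℝ)) := by
          rw [show (2:ℝ) * 2 ^ (-(1/2:ℝ)) = 2 ^ (1 - 1/2:ℝ) by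
            rw [Real.rpow_sub two_pos, Real.rpow_one]; rw [Real.rpow_neg (by norm_num)]; ring]
          norm_num
        rw [this]
        linarith
    have hVsub : V ⊆ S ∩ B := by
      rintro x ⟨hx1, hx2⟩
      have hx2' : Real.sqrt 2 < x i0 + x i1 := hx2
      constructor
      · show 1 < g x ^ 2
        have hpos : 0 < x i0 + x i1 := lt_trans hsqrt2pos hx2'
        have h1 : 1 < g x := by
          rw [hg]
          exact (one_lt_div hsqrt2pos).2 hx2'
        calc (1:ℝ) = 1 ^ 2 := (one_pow 2).symm
          _ < g x ^ 2 := by apply pow_lt_pow_left₀ h1 (by norm_num); norm_num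
      · rw [hB]
        exact le_of_lt (Set.mem_setOf_eq ▸ hx1)
    calc (0:ENNReal) < volume V := hVopen.measure_pos volume ⟨w, hwV⟩
      _ ≤ volume (S ∩ B) := measure_mono hVsub
  -- part 4
  have hpart4 : 0 < μ S := by
    rw [hμ, Measure.smul_apply, Measure.restrict_apply hSmeas, smul_eq_mul]
    exact ENNReal.mul_pos (ENNReal.inv_ne_zero.2 hvol_top.ne) hSB_pos.ne'
  -- a.e. membership in B
  have hae : ∀ᵐ x ∂μ, x ∈ B := by
    rw [hμ]
    exact Measure.ae_smul_measure (ae_restrict_mem hBmeas) _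
  -- part 5 integrand
  set f : (Fin n → ℝ) → ℝ := fun x => max (g x ^ 2 - 1) 0 with hf
  have hfcont : Continuous f := (((hgcont.pow 2).sub continuous_const).max continuous_const)
  have hfbound : ∀ᵐ x ∂μ, ‖f x‖ ≤ 3 := by
    filter_upwards [hae] with x hx
    have h1 : |g x| ≤ 2 := le_trans (hub x hx) hM2
    have h2 : g x ^ 2 ≤ 4 := by
      rw [← sq_abs]
      calc |g x| ^ 2 ≤ 2 ^ 2 := pow_le_pow_left₀ (abs_nonneg _) h1 2
        _ = 4 := by norm_num
    have h3 : 0 ≤ f x := le_max_right _ _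
    rw [Real.norm_eq_abs, abs_of_nonneg h3]
    exact max_le (by linarith) (by norm_num)
  have hfint : Integrable f μ :=
    Integrable.mono' (integrable_const 3) hfcont.aestronglyMeasurable hfbound
  have hsupp : Function.support f = S := by
    ext x
    simp only [Function.mem_support, hf, hS, Set.mem_setOf_eq]
    constructor
    · intro h
      by_contra h'
      push_neg at h'
      exact h (max_eq_right (by linarith))
    · intro h
      rw [max_eq_left (by linarith)]
      intro h'
      linarith
  have hpart5 : 0 < ∫ x, f x ∂μ := by
    exact (integral_pos_iff_support_of_nonneg (fun x => le_max_right _ _) hfint).2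
      (hsupp ▸ hpart4)
  -- part 6
  have hzero_ae : (fun x => max ((x i0) ^ 2 - 1) 0) =ᵐ[μ] 0 := by
    filter_upwards [hae] with x hx
    have h1 : |x i0| ≤ 1 := hcoord x hx i0
    have h2 : x i0 ^ 2 ≤ 1 := by
      rw [← sq_abs]
      calc |x i0| ^ 2 ≤ 1 ^ 2 := pow_le_pow_left₀ (abs_nonneg _) h1 2
        _ = 1 := one_pow 2
    simp [max_eq_right (by linarith : x i0 ^ 2 - 1 ≤ 0)]
  have hpart6 : (∫ x, max ((x i0) ^ 2 - 1) 0 ∂μ) = 0 := by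
    rw [integral_congr_ae hzero_ae]; simp
  -- part 6 integrability
  have hf2cont : Continuous (fun x : Fin n → ℝ => max ((x i0) ^ 2 - 1) 0) :=
    (((continuous_apply i0).pow 2).sub continuous_const).max continuous_const
  have hf2int : Integrable (fun x : Fin n → ℝ => max ((x i0) ^ 2 - 1) 0) μ := by
    refine Integrable.mono' (integrable_const 3) hf2cont.aestronglyMeasurable ?_
    filter_upwards [hae] with x hx
    have h1 : |x i0| ≤ 1 := hcoord x hx i0
    have h2 : x i0 ^ 2 ≤ 1 := by
      rw [← sq_abs]
      calc |x i0| ^ 2 ≤ 1 ^ 2 := pow_le_pow_left₀ (abs_nonneg _) h1 2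
        _ = 1 := one_pow 2
    rw [Real.norm_eq_abs, abs_of_nonneg (le_max_right _ _)]
    exact max_le (by linarith) (by norm_num)
  refine ⟨fun x hx => hcoord x hx i0, ⟨?_, ?_⟩, hgt1, hpart4, hpart5, hpart6, ?_⟩
  · obtain ⟨z, hz, hzv⟩ := hwit
    exact ⟨z, hz, hzv⟩
  · rintro y ⟨x, hx, rfl⟩
    exact hub x hx
  · intro h
    have haff : ConvexOn ℝ Set.univ (fun z : ℝ => z - 1) := by
      refine ⟨convex_univ, fun x _ y _ a b ha hb hab => ?_⟩
      simp only [smul_eq_mul]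
      linarith
    have hconv : ConvexOn ℝ Set.univ (fun z : ℝ => max (z - 1) 0) := by
      have := haff.sup (convexOn_const 0 convex_univ)
      exact this
    have := h (fun z => max (z - 1) 0) hconv hfint hf2int
    rw [hpart6] at this
    linarith [hpart5, this]
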